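/- (No-go for saturating the coherence bound in the qutrit quasi-cycle.) Let U and U′ be unitary complex matrices with 3×3 block decompositions as follows: U is indexed by Fin d₂ ⊕ Fin d₁ ⊕ Fin d₀ with blocks u_{ab}, and U′ is indexed by Fin d₂′ ⊕ Fin d₁′ ⊕ Fin d₀′ with blocks u′_{ab}, and both satisfy the zero-block pattern u₂₂ = u₂₁ = u₁₀ = u₀₂ = 0 (respectively u′₂₂ = u′₂₁ = u′₁₀ = u′₀₂ = 0). Suppose d₀ = d₁′, so that A := u₀₀ and B := u′₁₁ are square matrices of the same size. If A ≠ 0, B ≠ 0 and tr(A Aᴴ) ≠ tr(B Bᴴ), then |tr(A Bᴴ)| < √(tr(A Aᴴ) · tr(B Bᴴ)); i.e. the Cauchy–Schwarz bound for the coherence damping factor cannot be saturated. -/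

import Mathlib

open Matrix

noncomputable def matVec {n : ℕ} (M : Matrix (Fin n) (Fin n) ℂ) :
    EuclideanSpace ℂ (Fin n × Fin n) :=
  (WithLp.equiv 2 _).symm fun p => M p.1 p.2

lemma trace_eq_inner {n : ℕ} (M N : Matrix (Fin n) (Fin n) ℂ) :
    (M * Nᴴ).trace = inner ℂ (matVec N) (matVec M) := by
  simp [Matrix.trace, Matrix.diag, Matrix.mul_apply, conjTranspose_apply, PiLp.inner_apply,
    RCLike.inner_apply, Fintype.sum_prod_type, matVec, mul_comm]

lemma matVec_ne_zero {n : ℕ} {M : Matrix (Fin n) (Fin n) ℂ} (h : M ≠ 0) : matVec M ≠ 0 := by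
  intro h0
  apply h
  ext i j
  have := congrArg (fun v => v (i, j)) h0
  simpa [matVec] using this

/-- **No-go for saturating the coherence bound in the qutrit quasi-cycle.**
Let `U` and `U'` be unitaries with the quasi-cycle zero-block pattern
`u₂₂ = u₂₁ = u₁₀ = u₀₂ = 0`, where `U` is indexed by `Fin d₂ ⊕ Fin d₁ ⊕ Fin d₀` and
`U'` by `Fin d₂' ⊕ Fin d₁' ⊕ Fin d₀'` with `d₁' = d₀`. With `A = u₀₀` (block of `U`) and
`B = u'₁₁` (block of `U'`), if `A ≠ 0`, `B ≠ 0` and `tr(AAᴴ) ≠ tr(BBᴴ)`, then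
`|tr(ABᴴ)| < √(tr(AAᴴ)·tr(BBᴴ))`: the Cauchy–Schwarz bound cannot be saturated. -/
theorem quasi_cycle_no_saturation (d2 d1 d0 d2' d0' : ℕ)
    (hd2 : 1 ≤ d2) (hd1 : 1 ≤ d1) (hd0 : 1 ≤ d0) (hd2' : 1 ≤ d2') (hd0' : 1 ≤ d0')
    (U : Matrix (Fin d2 ⊕ Fin d1 ⊕ Fin d0) (Fin d2 ⊕ Fin d1 ⊕ Fin d0) ℂ)
    (hU : U ∈ Matrix.unitaryGroup (Fin d2 ⊕ Fin d1 ⊕ Fin d0) ℂ)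
    (U' : Matrix (Fin d2' ⊕ Fin d0 ⊕ Fin d0') (Fin d2' ⊕ Fin d0 ⊕ Fin d0') ℂ)
    (hU' : U' ∈ Matrix.unitaryGroup (Fin d2' ⊕ Fin d0 ⊕ Fin d0') ℂ)
    (h22 : ∀ (i : Fin d2) (j : Fin d2), U (Sum.inl i) (Sum.inl j) = 0)
    (h21 : ∀ (i : Fin d2) (j : Fin d1), U (Sum.inl i) (Sum.inr (Sum.inl j)) = 0)
    (h10 : ∀ (i : Fin d1) (j : Fin d0), U (Sum.inr (Sum.inl i)) (Sum.inr (Sum.inr j)) = 0)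
    (h02 : ∀ (i : Fin d0) (j : Fin d2), U (Sum.inr (Sum.inr i)) (Sum.inl j) = 0)
    (h22' : ∀ (i : Fin d2') (j : Fin d2'), U' (Sum.inl i) (Sum.inl j) = 0)
    (h21' : ∀ (i : Fin d2') (j : Fin d0), U' (Sum.inl i) (Sum.inr (Sum.inl j)) = 0)
    (h10' : ∀ (i : Fin d0) (j : Fin d0'), U' (Sum.inr (Sum.inl i)) (Sum.inr (Sum.inr j)) = 0)
    (h02' : ∀ (i : Fin d0') (j : Fin d2'), U' (Sum.inr (Sum.inr i)) (Sum.inl j) = 0)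
    (A : Matrix (Fin d0) (Fin d0) ℂ)
    (hA : A = Matrix.of fun i j => U (Sum.inr (Sum.inr i)) (Sum.inr (Sum.inr j)))
    (B : Matrix (Fin d0) (Fin d0) ℂ)
    (hB : B = Matrix.of fun i j => U' (Sum.inr (Sum.inl i)) (Sum.inr (Sum.inl j)))
    (hA0 : A ≠ 0) (hB0 : B ≠ 0)
    (htr : (A * Aᴴ).trace ≠ (B * Bᴴ).trace) :
    ‖(A * Bᴴ).trace‖ <
      Real.sqrt (((A * Aᴴ).trace).re * ((B * Bᴴ).trace).re) := by
  -- unitarity equations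
  have hUU : U * Uᴴ = 1 := by
    have := hU.2; rwa [Matrix.star_eq_conjTranspose] at this
  have hVU : Uᴴ * U = 1 := by
    have := hU.1; rwa [Matrix.star_eq_conjTranspose] at this
  have hUU' : U' * U'ᴴ = 1 := by
    have := hU'.2; rwa [Matrix.star_eq_conjTranspose] at this
  have hVU' : U'ᴴ * U' = 1 := by
    have := hU'.1; rwa [Matrix.star_eq_conjTranspose] at this
  set C : Matrix (Fin d2) (Fin d0) ℂ :=
    Matrix.of fun i j => U (Sum.inl i) (Sum.inr (Sum.inr j)) with hC
  set D : Matrix (Fin d0) (Fin d2') ℂ :=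
    Matrix.of fun i j => U' (Sum.inr (Sum.inl i)) (Sum.inl j) with hD
  have hCC : C * Cᴴ = 1 := by
    ext i i'
    have h := congrFun (congrFun hUU (Sum.inl i)) (Sum.inl i')
    simp only [Matrix.mul_apply, Fintype.sum_sum_type, conjTranspose_apply,
      h22, h21, zero_mul, mul_zero, Finset.sum_const_zero, zero_add,
      Matrix.one_apply, Sum.inl.injEq, star_zero] at h ⊢
    simpa [hC] using h
  have hPA : Cᴴ * C + Aᴴ * A = 1 := by
    ext j j'
    have h := congrFun (congrFun hVU (Sum.inr (Sum.inr j))) (Sum.inr (Sum.inr j'))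
    simp only [Matrix.mul_apply, Fintype.sum_sum_type, conjTranspose_apply,
      h10, zero_mul, mul_zero, Finset.sum_const_zero, star_zero,
      Matrix.one_apply, Sum.inr.injEq, Sum.inl.injEq, add_zero, zero_add] at h ⊢
    simp only [Matrix.add_apply, Matrix.mul_apply, conjTranspose_apply]
    simpa [hC, hA, Matrix.one_apply] using h
  have hDD : Dᴴ * D = 1 := by
    ext j j'
    have h := congrFun (congrFun hVU' (Sum.inl j)) (Sum.inl j')
    simp only [Matrix.mul_apply, Fintype.sum_sum_type, conjTranspose_apply,
      h22', h02', zero_mul, mul_zero, Finset.sum_const_zero, star_zero,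
      Matrix.one_apply, Sum.inl.injEq, add_zero, zero_add] at h ⊢
    simpa [hD] using h
  have hQB : D * Dᴴ + B * Bᴴ = 1 := by
    ext i i'
    have h := congrFun (congrFun hUU' (Sum.inr (Sum.inl i))) (Sum.inr (Sum.inl i'))
    simp only [Matrix.mul_apply, Fintype.sum_sum_type, conjTranspose_apply,
      h10', zero_mul, mul_zero, Finset.sum_const_zero, star_zero,
      Matrix.one_apply, Sum.inr.injEq, Sum.inl.injEq, add_zero, zero_add] at h ⊢
    simp only [Matrix.add_apply, Matrix.mul_apply, conjTranspose_apply]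
    simpa [hD, hB, Matrix.one_apply] using h
  -- AᴴA and BBᴴ are idempotent
  have hAAeq : Aᴴ * A = 1 - Cᴴ * C := by
    rw [← hPA]; abel
  have hPP : (Aᴴ * A) * (Aᴴ * A) = Aᴴ * A := by
    have hCCC : Cᴴ * C * (Cᴴ * C) = Cᴴ * C := by
      rw [Matrix.mul_assoc, ← Matrix.mul_assoc C, hCC, Matrix.one_mul]
    rw [hAAeq, sub_mul, mul_sub, mul_sub, mul_one, one_mul, hCCC]
    simp only [Matrix.mul_one]; abel
  have hBBeq : B * Bᴴ = 1 - D * Dᴴ := by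
    rw [← hQB]; abel
  have hQQ : (B * Bᴴ) * (B * Bᴴ) = B * Bᴴ := by
    have hDDD : D * Dᴴ * (D * Dᴴ) = D * Dᴴ := by
      rw [Matrix.mul_assoc, ← Matrix.mul_assoc Dᴴ, hDD, Matrix.one_mul]
    rw [hBBeq, sub_mul, mul_sub, mul_sub, mul_one, one_mul, hDDD]
    simp only [Matrix.mul_one]; abel
  -- trace of (BᴴB)² equals trace of BᴴB
  have hkey : ((Bᴴ * B) * (Bᴴ * B)).trace = (Bᴴ * B).trace := by
    have e1 : (Bᴴ * B) * (Bᴴ * B) = Bᴴ * (B * Bᴴ * B) := by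
      simp only [Matrix.mul_assoc]
    have e2 : B * Bᴴ * B * Bᴴ = (B * Bᴴ) * (B * Bᴴ) := by
      simp only [Matrix.mul_assoc]
    rw [e1, Matrix.trace_mul_comm, e2, hQQ, Matrix.trace_mul_comm]
  -- move to the inner-product picture
  set x := matVec A with hx
  set y := matVec B with hy
  have hx0 : x ≠ 0 := matVec_ne_zero hA0
  have hy0 : y ≠ 0 := matVec_ne_zero hB0
  have tAB : (A * Bᴴ).trace = inner ℂ y x := trace_eq_inner A B
  have tAA : (A * Aᴴ).trace = inner ℂ x x := trace_eq_inner A A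
  have tBB : (B * Bᴴ).trace = inner ℂ y y := trace_eq_inner B B
  have rAA : ((A * Aᴴ).trace).re = ‖x‖ ^ 2 := by
    rw [tAA, inner_self_eq_norm_sq_to_K (𝕜 := ℂ)]
    simp [← Complex.ofReal_pow]
  have rBB : ((B * Bᴴ).trace).re = ‖y‖ ^ 2 := by
    rw [tBB, inner_self_eq_norm_sq_to_K (𝕜 := ℂ)]
    simp [← Complex.ofReal_pow]
  rw [rAA, rBB, ← mul_pow, Real.sqrt_sq (by positivity), tAB]
  refine lt_of_le_of_ne (le_trans (norm_inner_le_norm (𝕜 := ℂ) y x)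
    (le_of_eq (mul_comm _ _))) ?_
  intro heq
  have heq' : ‖(inner ℂ y x : ℂ)‖ = ‖y‖ * ‖x‖ := by rw [heq]; ring
  obtain ⟨r, hr0, hxy⟩ := (norm_inner_eq_norm_iff (𝕜 := ℂ) hy0 hx0).mp heq'
  -- x = r • y, i.e. A = r • B
  have hAB : A = r • B := by
    ext i j
    have := congrArg (fun v => v (i, j)) hxy
    simpa [hx, hy, matVec] using this
  set c : ℂ := (starRingEnd ℂ) r * r with hc
  have hc0 : c ≠ 0 := mul_ne_zero (by simpa using hr0) hr0
  have hAArel : Aᴴ * A = c • (Bᴴ * B) := by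
    rw [hAB, conjTranspose_smul, Matrix.smul_mul, Matrix.mul_smul, smul_smul, hc]
    rfl
  set τ : ℂ := (Bᴴ * B).trace with hτ
  have hτ0 : τ ≠ 0 := by
    have : τ = (B * Bᴴ).trace := Matrix.trace_mul_comm _ _
    rw [this, tBB]
    exact inner_self_ne_zero.mpr hy0
  have hsq : c ^ 2 * τ = c * τ := by
    have := congrArg Matrix.trace hPP
    rw [hAArel] at this
    simp only [Matrix.smul_mul, Matrix.mul_smul, smul_smul, Matrix.trace_smul,
      smul_eq_mul] at this
    rw [hkey] at this
    calc c ^ 2 * τ = c * c * τ := by ring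
    _ = c * τ := this
  have hc1 : c = 1 := by
    have h1 : c ^ 2 = c := mul_right_cancel₀ hτ0 hsq
    have : c * c = c * 1 := by rw [mul_one, ← sq]; exact h1
    exact mul_left_cancel₀ hc0 this
  apply htr
  have : (A * Aᴴ).trace = (Aᴴ * A).trace := Matrix.trace_mul_comm _ _
  rw [this, hAArel, hc1, Matrix.trace_smul]
  rw [show (Bᴴ * B).trace = (B * Bᴴ).trace from Matrix.trace_mul_comm _ _]
  simp
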